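/- In a reduced graph G with n vertices and maximum degree Δ, every feedback vertex set has size at least n/(5Δ). -/

import Mathlib

open SimpleGraph Finset

universe u

def IsFVS {V : Type*} (G : SimpleGraph V) (S : Set V) : Prop :=
  (G.induce Sᶜ).IsAcyclic

def Reduced {V : Type*} (G : SimpleGraph V) : Prop :=
  (∀ v : V, 2 ≤ (G.neighborSet v).ncard) ∧
  ∀ u v : V, G.Adj u v → (G.neighborSet u).ncard = 2 → (G.neighborSet v).ncard = 2 →
    (G.neighborSet u ∩ G.neighborSet v).Nonempty


lemma exists_cycle_of_min_degree_two {V : Type*} [Fintype V] [Nonempty V] (G : SimpleGraph V)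
    [DecidableRel G.Adj] (h2 : ∀ v : V, 2 ≤ G.degree v) : ¬ G.IsAcyclic := by
  classical
  intro hac
  -- P n : there is a path of length n
  set P : ℕ → Prop := fun n => ∃ (u v : V) (p : G.Walk u v), p.IsPath ∧ p.length = n with hP
  have hP0 : P 0 := by
    obtain ⟨u⟩ := ‹Nonempty V›
    exact ⟨u, u, Walk.nil, Walk.IsPath.nil, rfl⟩
  have hPbig : ¬ P (Fintype.card V) := by
    rintro ⟨u, v, p, hp, hl⟩
    have := hp.length_lt
    omega
  have hstep : ∃ k, P k ∧ ¬ P (k + 1) := by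
    by_contra hcon
    push_neg at hcon
    have : ∀ n, P n := by
      intro n; induction n with
      | zero => exact hP0
      | succ n ih => exact hcon n ih
    exact hPbig (this _)
  obtain ⟨k, ⟨u, v, p, hp, hl⟩, hnk⟩ := hstep
  -- every neighbor of u is in p.support
  have hnbr : ∀ w, G.Adj u w → w ∈ p.support := by
    intro w hw
    by_contra hws
    exact hnk ⟨w, v, Walk.cons hw.symm p, (Walk.cons_isPath_iff _ _).2 ⟨hp, hws⟩, by simp [hl]⟩
  -- p is not nil : k ≥ 1
  cases p with
  | nil =>
    -- u = v, length 0; u has a neighbor, giving a path of length 1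
    have hne : (G.neighborFinset u).Nonempty := Finset.card_pos.mp (lt_of_lt_of_le two_pos (h2 u))
    obtain ⟨w, hw⟩ := hne
    rw [mem_neighborFinset] at hw
    exact hnk ⟨w, u, Walk.cons hw.symm Walk.nil, by simp [Walk.cons_isPath_iff, hw.ne'], by simp at hl ⊢; omega⟩
  | @cons _ u' _ h' q =>
    -- u has ≥ 2 neighbors, all in (cons h' q).support = u :: q.support; none equal u
    have hu'mem : u' ∈ G.neighborFinset u := by rwa [mem_neighborFinset]
    have h2' : 1 < (G.neighborFinset u).card := lt_of_lt_of_le one_lt_two (h2 u)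
    have : ∃ w ∈ G.neighborFinset u, w ≠ u' := by
      by_contra hcon
      push_neg at hcon
      have : G.neighborFinset u ⊆ {u'} := fun x hx => Finset.mem_singleton.2 (hcon x hx)
      have hle := Finset.card_le_card this
      simp only [Finset.card_singleton] at hle
      exact absurd (lt_of_lt_of_le h2' hle) (lt_irrefl _)
    obtain ⟨w, hwmem, hwne⟩ := this
    rw [mem_neighborFinset] at hwmem
    have hwsup : w ∈ q.support := by
      have := hnbr w hwmem
      rw [Walk.support_cons] at this
      rcases List.mem_cons.1 this with h | h
      · exact absurd h hwmem.ne'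
      · exact h
    have hqpath : q.IsPath := (Walk.cons_isPath_iff _ _).1 hp |>.1
    have hunotq : u ∉ q.support := ((Walk.cons_isPath_iff _ _).1 hp).2
    set r : G.Walk u w := Walk.cons h' (q.takeUntil w hwsup) with hr
    have hrpath : r.IsPath := by
      rw [hr, Walk.cons_isPath_iff]
      exact ⟨hqpath.takeUntil hwsup, fun hc => hunotq (Walk.support_takeUntil_subset _ hwsup hc)⟩
    have hcyc : (Walk.cons hwmem.symm r).IsCycle := by
      rw [Walk.cons_isCycle_iff]
      refine ⟨hrpath, ?_⟩
      rw [hr]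
      intro hmem
      rw [Walk.edges_cons, List.mem_cons] at hmem
      rcases hmem with h | h
      · rw [Sym2.eq_iff] at h
        rcases h with ⟨h1, h2⟩ | ⟨h1, h2⟩
        · exact hwmem.ne' h1
        · exact hwne h1
      · exact hunotq (Walk.support_takeUntil_subset _ hwsup (Walk.snd_mem_support_of_mem_edges _ h))
    exact hac _ hcyc


lemma isAcyclic_induce {V : Type u} {G : SimpleGraph V} (h : G.IsAcyclic) (s : Set V) :
    (G.induce s).IsAcyclic := by
  intro v c hc
  exact h (c.map (SimpleGraph.Embedding.induce (G := G) s).toHom)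
    (hc.map (SimpleGraph.Embedding.induce (G := G) s).injective)

lemma forest_card_edge_le : ∀ (n : ℕ) (V : Type u) [Fintype V] (G : SimpleGraph V)
    [DecidableRel G.Adj], Fintype.card V ≤ n → G.IsAcyclic →
    G.edgeFinset.card ≤ Fintype.card V := by
  intro n
  induction n with
  | zero =>
    intro V _ G _ hcard _
    have := G.card_edgeFinset_le_card_choose_two
    interval_cases h : Fintype.card V
    simpa using this
  | succ n ih =>
    intro V _ G _ hcard hac
    classical
    by_cases hle : Fintype.card V ≤ n
    · exact ih V G hle hac
    have hcV : Fintype.card V = n + 1 := by omega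
    have hne : Nonempty V := Fintype.card_pos_iff.mp (by omega)
    -- find a vertex of degree ≤ 1
    have hex : ∃ v, G.degree v ≤ 1 := by
      by_contra hcon
      push_neg at hcon
      exact exists_cycle_of_min_degree_two G (fun v => hcon v) hac
    obtain ⟨v, hv⟩ := hex
    have hcs : Fintype.card ({v}ᶜ : Set V) = n := by
      rw [Fintype.card_compl_set]
      simp [hcV]
    set G' := G.induce ({v}ᶜ : Set V) with hG'
    haveI : DecidableRel G'.Adj := Classical.decRel _
    have hac' : G'.IsAcyclic := isAcyclic_induce hac _
    have hih := ih _ G' (by omega) hac'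
    -- split edges by whether they contain v
    have hsplit := Finset.card_filter_add_card_filter_not
      (s := G.edgeFinset) (p := fun e => v ∈ e)
    have h1 : (G.edgeFinset.filter (fun e => v ∈ e)).card = G.degree v := by
      rw [← incidenceFinset_eq_filter, card_incidenceFinset_eq_degree]
    have h2 : (G.edgeFinset.filter (fun e => ¬ v ∈ e)).card = G'.edgeFinset.card := by
      apply Eq.symm
      apply Finset.card_bij (fun e _ => Sym2.map Subtype.val e)
      · intro e he
        induction e with
        | _ a b =>
          simp only [mem_edgeFinset, mem_edgeSet] at he
          have hadj : G.Adj ↑a ↑b := he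
          simp only [Sym2.map_pair_eq, Finset.mem_filter, mem_edgeFinset, mem_edgeSet,
            Sym2.mem_iff]
          refine ⟨hadj, ?_⟩
          rintro (h | h)
          · exact a.2 h.symm
          · exact b.2 h.symm
      · intro e1 h1 e2 h2 heq
        exact Sym2.map.injective Subtype.val_injective heq
      · intro e he
        induction e with
        | _ x y =>
          simp only [Finset.mem_filter, mem_edgeFinset, mem_edgeSet, Sym2.mem_iff] at he
          obtain ⟨hadj, hnv⟩ := he
          push_neg at hnv
          refine ⟨s(⟨x, fun h => hnv.1 h.symm⟩, ⟨y, fun h => hnv.2 h.symm⟩), ?_, rfl⟩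
          simp only [mem_edgeFinset, mem_edgeSet]
          exact hadj
    have hdeg1 : G.degree v ≤ 1 := hv
    omega

theorem fvs_size_lower_bound {V : Type*} [Fintype V] (G : SimpleGraph V)
    [DecidableRel G.Adj] (hG : Reduced G) (hΔ : 1 ≤ G.maxDegree)
    (S : Set V) (hS : IsFVS G S) :
    Fintype.card V ≤ 5 * G.maxDegree * S.ncard := by
  classical
  set W := ↥(Sᶜ : Set V) with hW
  set H : SimpleGraph W := G.induce Sᶜ with hH
  haveI : DecidableRel H.Adj := Classical.decRel _
  have hHadj : ∀ a b : W, H.Adj a b ↔ G.Adj ↑a ↑b := by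
    intro a b; rw [hH]; simp [comap_adj]
  have hac : H.IsAcyclic := hS
  set d : W → ℕ := fun v => H.degree v with hd
  set sdeg : W → ℕ := fun v => ((G.neighborFinset ↑v).filter (· ∈ S)).card with hsdeg
  have hnc : ∀ x : V, (G.neighborSet x).ncard = G.degree x := by
    intro x
    rw [Set.ncard_eq_toFinset_card']
    simp [SimpleGraph.degree, neighborFinset_def]
  have hmindeg : ∀ x : V, 2 ≤ G.degree x := by
    intro x; rw [← hnc]; exact hG.1 x
  -- (1) degree splitting
  have hsplit : ∀ v : W, G.degree ↑v = d v + sdeg v := by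
    intro v
    have h0 := Finset.card_filter_add_card_filter_not
      (s := G.neighborFinset ↑v) (p := fun x => x ∈ S)
    have h1 : (H.neighborFinset v).card = ((G.neighborFinset ↑v).filter (fun x => ¬ x ∈ S)).card := by
      refine Finset.card_bij (fun (w : W) (_ : w ∈ H.neighborFinset v) => (w : V)) ?_ ?_ ?_
      · intro w hw
        rw [mem_neighborFinset, hHadj] at hw
        simp only [Finset.mem_filter, mem_neighborFinset]
        exact ⟨hw, w.2⟩
      · intro a _ b _ hab; exact Subtype.val_injective hab
      · intro x hx
        simp only [Finset.mem_filter, mem_neighborFinset] at hx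
        exact ⟨⟨x, hx.2⟩, by rw [mem_neighborFinset, hHadj]; exact hx.1, rfl⟩
    have h2 : G.degree ↑v = (G.neighborFinset ↑v).card := rfl
    have h3 : d v = (H.neighborFinset v).card := rfl
    have h4 : sdeg v = ((G.neighborFinset ↑v).filter (fun x => x ∈ S)).card := rfl
    omega
  -- (2) sum of forest degrees
  have hdsum : ∑ v : W, d v = 2 * H.edgeFinset.card := by
    rw [hd]; exact H.sum_degrees_eq_twice_card_edges
  -- (3) forest edge bound
  have hedge : H.edgeFinset.card ≤ Fintype.card W :=
    forest_card_edge_le (Fintype.card W) W H le_rfl hac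
  -- (4) edges to S bounded by Δ|S|
  have hssum : ∑ v : W, sdeg v ≤ G.maxDegree * S.toFinset.card := by
    have hrw : ∀ v : W, sdeg v = (S.toFinset.filter (fun u => G.Adj ↑v u)).card := by
      intro v
      have heq : ((G.neighborFinset ↑v).filter (· ∈ S)) = (S.toFinset.filter (fun u => G.Adj ↑v u)) := by
        ext a
        simp only [Finset.mem_filter, mem_neighborFinset, Set.mem_toFinset]
        tauto
      show ((G.neighborFinset ↑v).filter (· ∈ S)).card = _
      rw [heq]
    calc ∑ v : W, sdeg v
        = ∑ v : W, ∑ u ∈ S.toFinset, (if G.Adj ↑v u then 1 else 0) := by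
          refine Finset.sum_congr rfl fun v _ => ?_
          rw [hrw v, Finset.card_filter]
      _ = ∑ u ∈ S.toFinset, ∑ v : W, (if G.Adj ↑v u then 1 else 0) := Finset.sum_comm
      _ ≤ ∑ u ∈ S.toFinset, G.maxDegree := by
          refine Finset.sum_le_sum fun u _ => ?_
          have h1 : ∑ v : W, (if G.Adj ↑v u then 1 else 0)
              = (Finset.univ.filter (fun v : W => G.Adj ↑v u)).card := by
            rw [Finset.card_filter]
          rw [h1]
          have h2 : (Finset.univ.filter (fun v : W => G.Adj ↑v u)).card
              ≤ (G.neighborFinset u).card := by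
            refine Finset.card_le_card_of_injOn (fun (v : W) => (v : V)) ?_ ?_
            · intro v hv
              simp only [Finset.mem_coe, Finset.mem_filter] at hv ⊢
              rw [mem_neighborFinset]
              exact hv.2.symm
            · intro a _ b _ hab; exact Subtype.val_injective hab
          exact le_trans h2 (G.degree_le_maxDegree u)
      _ = G.maxDegree * S.toFinset.card := by rw [Finset.sum_const, smul_eq_mul, mul_comm]
  -- (5) the set D of "buried degree-2" vertices and the discharge function m
  set D : Finset W := Finset.univ.filter (fun v => G.degree ↑v = 2 ∧ sdeg v = 0) with hD
  set m : W → ℕ := fun v => (H.neighborFinset v ∩ D).card with hm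
  -- (5a) total discharge
  have hDmem : ∀ v : W, v ∈ D ↔ (G.degree ↑v = 2 ∧ sdeg v = 0) := by
    intro v; rw [hD]; simp only [Finset.mem_filter, Finset.mem_univ, true_and]
  have hinterfil : ∀ v : W, H.neighborFinset v ∩ D = D.filter (fun u => H.Adj v u) := by
    intro v; ext a
    simp only [Finset.mem_inter, mem_neighborFinset, Finset.mem_filter]
    tauto
  have hmsum : ∑ v : W, m v = 2 * D.card := by
    calc ∑ v : W, m v
        = ∑ v : W, ∑ u ∈ D, (if H.Adj v u then 1 else 0) := by
          refine Finset.sum_congr rfl fun v _ => ?_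
          show (H.neighborFinset v ∩ D).card = _
          rw [hinterfil v, Finset.card_filter]
      _ = ∑ u ∈ D, ∑ v : W, (if H.Adj v u then 1 else 0) := Finset.sum_comm
      _ = ∑ u ∈ D, d u := by
          refine Finset.sum_congr rfl fun u _ => ?_
          have h1 : ∑ v : W, (if H.Adj v u then 1 else 0)
              = (Finset.univ.filter (fun v : W => H.Adj v u)).card := by
            rw [Finset.card_filter]
          have h2 : (Finset.univ.filter (fun v : W => H.Adj v u)) = H.neighborFinset u := by
            ext a
            simp only [Finset.mem_filter, Finset.mem_univ, true_and, mem_neighborFinset]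
            exact adj_comm H a u
          rw [h1, h2]; rfl
      _ = ∑ _u ∈ D, 2 := by
          refine Finset.sum_congr rfl fun u hu => ?_
          obtain ⟨h1, h2⟩ := (hDmem u).1 hu
          have := hsplit u
          omega
      _ = 2 * D.card := by rw [Finset.sum_const, smul_eq_mul, mul_comm]
  -- (5b) D is independent in the forest
  have hind : ∀ v ∈ D, m v = 0 := by
    intro v hv
    obtain ⟨hdeg2, hs0⟩ := (hDmem v).1 hv
    by_contra hne
    have hpos : 0 < (H.neighborFinset v ∩ D).card := Nat.pos_of_ne_zero hne
    obtain ⟨u, hu⟩ := Finset.card_pos.1 hpos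
    rw [Finset.mem_inter, mem_neighborFinset] at hu
    obtain ⟨hadjH, huD⟩ := hu
    obtain ⟨hudeg2, -⟩ := (hDmem u).1 huD
    have hadj : G.Adj ↑v ↑u := (hHadj v u).1 hadjH
    obtain ⟨w, hw⟩ := hG.2 ↑v ↑u hadj (by rw [hnc]; exact hdeg2) (by rw [hnc]; exact hudeg2)
    obtain ⟨hwv, hwu⟩ := hw
    rw [mem_neighborSet] at hwv hwu
    have hwS : w ∈ (Sᶜ : Set V) := by
      intro hwmem
      have : w ∈ (G.neighborFinset ↑v).filter (· ∈ S) := by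
        simp only [Finset.mem_filter, mem_neighborFinset]
        exact ⟨hwv, hwmem⟩
      have hcpos : 0 < ((G.neighborFinset ↑v).filter (· ∈ S)).card :=
        Finset.card_pos.2 ⟨w, this⟩
      have : sdeg v = ((G.neighborFinset ↑v).filter (· ∈ S)).card := rfl
      omega
    set wW : W := ⟨w, hwS⟩ with hwW
    have h_vw : H.Adj v wW := (hHadj v wW).2 hwv
    have h_uw : H.Adj u wW := (hHadj u wW).2 hwu
    have hne_vu : v ≠ u := fun h => hadj.ne (congrArg Subtype.val h)
    have hne_vw : v ≠ wW := fun h => hwv.ne (congrArg Subtype.val h)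
    have hne_uw : u ≠ wW := fun h => hwu.ne (congrArg Subtype.val h)
    set p : H.Walk v wW := Walk.cons hadjH (Walk.cons h_uw Walk.nil) with hp
    have hpath : p.IsPath := by
      rw [hp, Walk.isPath_def]
      simp only [Walk.support_cons, Walk.support_nil, List.nodup_cons, List.mem_cons,
        List.mem_singleton, List.not_mem_nil, not_false_iff, List.nodup_nil, and_true]
      refine ⟨?_, ?_⟩
      · rintro (h | h | h)
        · exact hne_vu h
        · exact hne_vw h
        · exact h.elim
      · rintro (h | h)
        · exact hne_uw h
        · exact h.elim
    have hedges : s(wW, v) ∉ p.edges := by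
      rw [hp]
      simp only [Walk.edges_cons, Walk.edges_nil, List.mem_cons, List.not_mem_nil, or_false,
        Sym2.eq_iff]
      rintro ((⟨h1, -⟩ | ⟨h1, -⟩) | (⟨h1, -⟩ | ⟨-, h2⟩))
      · exact hne_vw h1.symm
      · exact hne_uw h1.symm
      · exact hne_uw h1.symm
      · exact hne_vu h2
    exact hac _ ((Walk.cons_isCycle_iff p h_vw.symm).2 ⟨hpath, hedges⟩)
  -- (6) pointwise discharging inequality
  have hpoint : ∀ v : W, (if v ∈ D then 0 else 2) + m v + 10 ≤ 8 * sdeg v + 5 * d v := by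
    intro v
    have hmd : m v ≤ d v := by
      have h1 : (H.neighborFinset v ∩ D).card ≤ (H.neighborFinset v).card :=
        Finset.card_le_card Finset.inter_subset_left
      have h2 : m v = (H.neighborFinset v ∩ D).card := rfl
      have h3 : d v = (H.neighborFinset v).card := rfl
      omega
    have hsp := hsplit v
    have hdeg := hmindeg ↑v
    by_cases hvD : v ∈ D
    · obtain ⟨h1, h2⟩ := (hDmem v).1 hvD
      have h0 := hind v hvD
      simp only [if_pos hvD]
      omega
    · have hnD : ¬ (G.degree ↑v = 2 ∧ sdeg v = 0) := fun hc => hvD ((hDmem v).2 hc)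
      simp only [if_neg hvD]
      rcases Nat.eq_zero_or_pos (sdeg v) with h | h
      · have : G.degree ↑v ≠ 2 := fun hc => hnD ⟨hc, h⟩
        omega
      · omega
  -- (7) sum everything
  have hsum := Finset.sum_le_sum (fun (v : W) (_ : v ∈ Finset.univ) => hpoint v)
  have e1 : ∑ v : W, ((if v ∈ D then 0 else 2) + m v + 10)
      = (∑ v : W, (if v ∈ D then 0 else 2)) + (∑ v : W, m v) + (Fintype.card W) * 10 := by
    rw [Finset.sum_add_distrib, Finset.sum_add_distrib, Finset.sum_const, Finset.card_univ,
      smul_eq_mul]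
  have e2 : ∑ v : W, (8 * sdeg v + 5 * d v)
      = 8 * (∑ v : W, sdeg v) + 5 * (∑ v : W, d v) := by
    rw [Finset.sum_add_distrib, Finset.mul_sum, Finset.mul_sum]
  have hite : (∑ v : W, (if v ∈ D then 0 else 2)) + 2 * D.card = 2 * Fintype.card W := by
    have h0 := Finset.card_filter_add_card_filter_not
      (s := (Finset.univ : Finset W)) (p := (· ∈ D))
    have h1 : (Finset.univ.filter (· ∈ D) : Finset W) = D := by
      ext a; simp
    have h2 : ∑ v : W, (if v ∈ D then 0 else 2)
        = (Finset.univ.filter (fun v : W => ¬ v ∈ D)).card * 2 := by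
      rw [Finset.sum_ite, Finset.sum_const, Finset.sum_const]
      simp [smul_eq_mul]
    rw [h2]
    rw [h1] at h0
    rw [Finset.card_univ] at h0
    omega
  -- derive the bound on the forest size
  obtain ⟨X, hX⟩ : ∃ X, G.maxDegree * S.toFinset.card = X := ⟨_, rfl⟩
  rw [hX] at hssum
  have hWbound : Fintype.card W ≤ 4 * X := by omega
  -- (8) final count
  have hcompl : Fintype.card W + Fintype.card S = Fintype.card V := by
    have h1 : (Sᶜ : Set V).toFinset.card = Fintype.card W := Set.toFinset_card _
    have h2 : S.toFinset.card = Fintype.card S := Set.toFinset_card _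
    have h3 : (Sᶜ : Set V).toFinset = (S.toFinset)ᶜ := by ext a; simp
    have h4 : (S.toFinsetᶜ).card = Fintype.card V - S.toFinset.card := Finset.card_compl _
    have h5 : S.toFinset.card ≤ Fintype.card V := by
      have := Finset.card_le_univ S.toFinset
      simpa [Finset.card_univ] using this
    rw [h3] at h1
    omega
  have hStf : S.toFinset.card = Fintype.card S := Set.toFinset_card S
  have hsle : S.toFinset.card ≤ G.maxDegree * S.toFinset.card :=
    Nat.le_mul_of_pos_left _ hΔ
  rw [hX] at hsle
  have hfinal : Fintype.card V ≤ 5 * X := by omega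
  have hncard : S.ncard = S.toFinset.card := Set.ncard_eq_toFinset_card' S
  rw [hncard]
  calc Fintype.card V ≤ 5 * X := hfinal
    _ = 5 * (G.maxDegree * S.toFinset.card) := by rw [hX]
    _ = 5 * G.maxDegree * S.toFinset.card := by ring
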